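/- Let H be a Hopf algebra over a field K and A a finite-dimensional H-comodule algebra with multiplication m and dual basis (v_i), (v_i*) of A. Then the map φ(m) : A → A ⊗ A*, a ↦ Σ_i a v_i ⊗ v_i*, is an injective morphism of H-comodule algebras (a monomorphism in the category of algebras in M^H), where A ⊗ A* carries the internal-endomorphism algebra structure. Consequently, the algebras of the form V ⊗ V* for finite-dimensional right H-comodules V form a system of cogenerators for the category of finite-dimensional algebras in M^H. -/

import Mathlib

open TensorProduct LinearMap

section ComodPre
variable (K : Type u) [Field K] (H : Type u) [Ring H] [HopfAlgebra K H]

/-- `ρ` is a right `H`-comodule structure on `V`. -/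
def IsComodule {V : Type u} [AddCommMonoid V] [Module K V]
    (ρ : V →ₗ[K] V ⊗[K] H) : Prop :=
  (∀ v : V, (TensorProduct.assoc K V H H) ((LinearMap.rTensor H ρ) (ρ v)) =
      (LinearMap.lTensor V (Coalgebra.comul (R := K))) (ρ v)) ∧
  (∀ v : V, (TensorProduct.rid K V)
      ((LinearMap.lTensor V (Coalgebra.counit (R := K))) (ρ v)) = v)

/-- `f` is a morphism of right `H`-comodules. -/
def IsComodHom {X Y : Type u} [AddCommMonoid X] [Module K X]
    [AddCommMonoid Y] [Module K Y]
    (ρX : X →ₗ[K] X ⊗[K] H) (ρY : Y →ₗ[K] Y ⊗[K] H) (f : X →ₗ[K] Y) : Prop :=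
  ∀ x : X, ρY (f x) = (LinearMap.rTensor H f) (ρX x)

/-- The tensor product coaction on `X ⊗ Y` in the monoidal category `M^H`. -/
noncomputable def tensorCoaction {X Y : Type u} [AddCommMonoid X] [Module K X]
    [AddCommMonoid Y] [Module K Y]
    (ρX : X →ₗ[K] X ⊗[K] H) (ρY : Y →ₗ[K] Y ⊗[K] H) :
    (X ⊗[K] Y) →ₗ[K] (X ⊗[K] Y) ⊗[K] H :=
  (TensorProduct.map LinearMap.id (LinearMap.mul' K H)) ∘ₗ
    (TensorProduct.tensorTensorTensorComm K X H Y H).toLinearMap ∘ₗ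
      (TensorProduct.map ρX ρY)

/-- The trivial coaction on the monoidal unit `K`: `k ↦ k ⊗ 1`. -/
noncomputable def trivialCoaction : K →ₗ[K] K ⊗[K] H :=
  (TensorProduct.mk K K H).flip 1

variable (V : Type u) [AddCommGroup V] [Module K V] [FiniteDimensional K V]

/-- The multiplication `1_V ⊗ ev_V ⊗ 1_{V*}` of the internal-endomorphism algebra
`V ⊗ V*` (for a finite-dimensional `V`). -/
noncomputable def endMul :
    ((V ⊗[K] Module.Dual K V) ⊗[K] (V ⊗[K] Module.Dual K V)) →ₗ[K]
      (V ⊗[K] Module.Dual K V) :=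
  (LinearMap.rTensor (Module.Dual K V)
      ((TensorProduct.rid K V).toLinearMap ∘ₗ
        (LinearMap.lTensor V (contractLeft K V)) ∘ₗ
          (TensorProduct.assoc K V (Module.Dual K V) V).toLinearMap)) ∘ₗ
    (TensorProduct.assoc K (V ⊗[K] Module.Dual K V) V (Module.Dual K V)).symm.toLinearMap

/-- The comultiplication `1_{V*} ⊗ co_V ⊗ 1_V` of the comatrix coalgebra `V* ⊗ V`
(for a finite-dimensional `V`). -/
noncomputable def comatrixComul :
    (Module.Dual K V ⊗[K] V) →ₗ[K]
      ((Module.Dual K V ⊗[K] V) ⊗[K] (Module.Dual K V ⊗[K] V)) :=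
  (TensorProduct.assoc K (Module.Dual K V) V (Module.Dual K V ⊗[K] V)).symm.toLinearMap ∘ₗ
    (LinearMap.lTensor (Module.Dual K V)
      ((TensorProduct.assoc K V (Module.Dual K V) V).toLinearMap ∘ₗ
        (LinearMap.rTensor V (coevaluation K V)) ∘ₗ
          (TensorProduct.lid K V).symm.toLinearMap))

end ComodPre

section Stmt14
variable (K : Type u) [Field K] (H : Type u) [Ring H] [HopfAlgebra K H]

/-- A finite-dimensional algebra in the monoidal category `M^H` of right
`H`-comodules, i.e. a finite-dimensional `H`-comodule algebra. -/
structure FDComodAlg : Type (u + 1) where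
  carrier : Type u
  [ag : AddCommGroup carrier]
  [md : Module K carrier]
  [fd : FiniteDimensional K carrier]
  mul : carrier ⊗[K] carrier →ₗ[K] carrier
  one : K →ₗ[K] carrier
  coact : carrier →ₗ[K] carrier ⊗[K] H
  mul_assoc' : ∀ x : (carrier ⊗[K] carrier) ⊗[K] carrier,
    mul (LinearMap.rTensor carrier mul x) =
    mul (LinearMap.lTensor carrier mul
      ((TensorProduct.assoc K carrier carrier carrier) x))
  one_mul' : ∀ a : carrier, mul ((one 1) ⊗ₜ[K] a) = a
  mul_one' : ∀ a : carrier, mul (a ⊗ₜ[K] (one 1)) = a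
  comod : IsComodule K H coact
  mul_hom : IsComodHom K H (tensorCoaction K H coact coact) coact mul
  one_hom : IsComodHom K H (trivialCoaction K H) coact one

attribute [instance] FDComodAlg.ag FDComodAlg.md FDComodAlg.fd

/-- A finite-dimensional right `H`-comodule together with the dual comodule structure
on `V*` (the right dual in `M^H`, defined using the antipode), for which evaluation
and coevaluation are morphisms of comodules. -/
structure DualizedComod : Type (u + 1) where
  V : Type u
  [ag : AddCommGroup V]
  [md : Module K V]
  [fd : FiniteDimensional K V]
  coact : V →ₗ[K] V ⊗[K] H
  comod : IsComodule K H coact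
  dcoact : Module.Dual K V →ₗ[K] Module.Dual K V ⊗[K] H
  dcomod : IsComodule K H dcoact
  ev_hom : IsComodHom K H (tensorCoaction K H dcoact coact) (trivialCoaction K H)
    (contractLeft K V)
  coev_hom : IsComodHom K H (trivialCoaction K H) (tensorCoaction K H coact dcoact)
    (coevaluation K V)

attribute [instance] DualizedComod.ag DualizedComod.md DualizedComod.fd

/-- Morphisms of `H`-comodule algebras. -/
def IsCAHom (B₁ B₂ : FDComodAlg K H) (f : B₁.carrier →ₗ[K] B₂.carrier) : Prop :=
  (∀ x, f (B₁.mul x) = B₂.mul (TensorProduct.map f f x)) ∧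
  (∀ k : K, f (B₁.one k) = B₂.one k) ∧
  IsComodHom K H B₁.coact B₂.coact f

variable {K H}

/-- The map `φ(m) : A → A ⊗ A*`, `a ↦ Σ_i (a vᵢ) ⊗ vᵢ*`, i.e. the left regular
representation of `A` in its internal endomorphism algebra. -/
noncomputable def phiMap (Al : Type u) [AddCommGroup Al] [Module K Al]
    [FiniteDimensional K Al] (mulA : Al ⊗[K] Al →ₗ[K] Al) :
    Al →ₗ[K] Al ⊗[K] Module.Dual K Al :=
  (LinearMap.rTensor (Module.Dual K Al) mulA) ∘ₗ
    (TensorProduct.assoc K Al Al (Module.Dual K Al)).symm.toLinearMap ∘ₗ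
      (LinearMap.lTensor Al (coevaluation K Al)) ∘ₗ
        (TensorProduct.rid K Al).symm.toLinearMap

namespace Thm49

set_option synthInstance.maxHeartbeats 1000000
set_option maxHeartbeats 4000000

open scoped Classical

open TensorProduct LinearMap Module Coalgebra HopfAlgebra

variable {K : Type u} [Field K] {H : Type u} [Ring H] [HopfAlgebra K H]

section Extract

variable {M W : Type u} [AddCommGroup M] [Module K M] [AddCommGroup W] [Module K W]

/-- Extraction of the `φ`-coefficient of an element of `M ⊗ W`. -/
noncomputable def extr (φ : M →ₗ[K] K) : M ⊗[K] W →ₗ[K] W :=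
  (TensorProduct.lid K W).toLinearMap ∘ₗ LinearMap.rTensor W φ

@[simp] lemma extr_tmul (φ : M →ₗ[K] K) (m : M) (w : W) :
    extr φ (m ⊗ₜ[K] w) = φ m • w := by
  simp [extr]

variable {ι : Type u} [Fintype ι]

lemma expand (b : Basis ι K M) (t : M ⊗[K] W) :
    t = ∑ i, b i ⊗ₜ[K] extr (b.coord i) t := by
  induction t using TensorProduct.induction_on with
  | zero => simp
  | tmul m w =>
      simp only [extr_tmul, Basis.coord_apply, tmul_smul]
      simp only [smul_tmul']
      rw [← sum_tmul, b.sum_repr]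
  | add x y hx hy =>
      simp only [map_add, tmul_add]
      rw [Finset.sum_add_distrib, ← hx, ← hy]

lemma extr_sum (b : Basis ι K M) [DecidableEq ι] (w : ι → W) (j : ι) :
    extr (b.coord j) (∑ i, b i ⊗ₜ[K] w i) = w j := by
  rw [map_sum]
  simp only [extr_tmul, Basis.coord_apply, Basis.repr_self, Finsupp.single_apply]
  simp [ite_smul]

end Extract

section Coef

variable {V : Type u} [AddCommGroup V] [Module K V] [FiniteDimensional K V]

/-- Matrix coefficients of a coaction w.r.t. the `ofVectorSpace` basis. -/
noncomputable def hmat (ρ : V →ₗ[K] V ⊗[K] H) (i j : Basis.ofVectorSpaceIndex K V) : H :=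
  extr ((Basis.ofVectorSpace K V).coord i) (ρ (Basis.ofVectorSpace K V j))

lemma coact_basis (ρ : V →ₗ[K] V ⊗[K] H) (j : Basis.ofVectorSpaceIndex K V) :
    ρ (Basis.ofVectorSpace K V j) =
      ∑ i, Basis.ofVectorSpace K V i ⊗ₜ[K] hmat ρ i j :=
  expand _ _

variable {ρ : V →ₗ[K] V ⊗[K] H} (hρ : IsComodule K H ρ)
include hρ

lemma comul_hmat (i j : Basis.ofVectorSpaceIndex K V) :
    Coalgebra.comul (R := K) (hmat ρ i j) = ∑ k, hmat ρ i k ⊗ₜ[K] hmat ρ k j := by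
  classical
  have h1 := hρ.1 (Basis.ofVectorSpace K V j)
  simp only [coact_basis ρ, map_sum, rTensor_tmul, lTensor_tmul, sum_tmul,
    assoc_tmul] at h1
  rw [Finset.sum_comm] at h1
  simp only [← tmul_sum] at h1
  have h2 := congrArg (extr ((Basis.ofVectorSpace K V).coord i)) h1
  rw [extr_sum, extr_sum] at h2
  exact h2.symm

open scoped Classical in
lemma counit_hmat (i j : Basis.ofVectorSpaceIndex K V) :
    Coalgebra.counit (R := K) (hmat ρ i j) = if i = j then 1 else 0 := by
  classical
  have h1 := hρ.2 (Basis.ofVectorSpace K V j)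
  rw [coact_basis ρ j, map_sum, map_sum] at h1
  simp only [lTensor_tmul, rid_tmul] at h1
  have h2 := congrArg ((Basis.ofVectorSpace K V).coord i) h1
  rw [map_sum] at h2
  simp only [map_smul, Basis.coord_apply, Basis.repr_self, Finsupp.single_apply] at h2
  rw [Finset.sum_congr rfl (fun k _ => by rw [smul_eq_mul, mul_ite, mul_one, mul_zero]),
    Finset.sum_ite_eq'] at h2
  simpa [eq_comm] using h2

open scoped Classical in
lemma antipode_mul_hmat (i j : Basis.ofVectorSpaceIndex K V) :
    ∑ k, antipode (R := K) (hmat ρ i k) * hmat ρ k j =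
      if i = j then (1 : H) else 0 := by
  classical
  have h1 := mul_antipode_rTensor_comul_apply (R := K) (hmat ρ i j)
  rw [comul_hmat hρ, map_sum, map_sum] at h1
  simp only [rTensor_tmul, mul'_apply] at h1
  rw [h1, counit_hmat hρ]
  split <;> simp

open scoped Classical in
lemma mul_antipode_hmat (i j : Basis.ofVectorSpaceIndex K V) :
    ∑ k, hmat ρ i k * antipode (R := K) (hmat ρ k j) =
      if i = j then (1 : H) else 0 := by
  classical
  have h1 := mul_antipode_lTensor_comul_apply (R := K) (hmat ρ i j)
  rw [comul_hmat hρ, map_sum, map_sum] at h1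
  simp only [lTensor_tmul, mul'_apply] at h1
  rw [h1, counit_hmat hρ]
  split <;> simp

open scoped Classical in
lemma comul_antipode_hmat (i j : Basis.ofVectorSpaceIndex K V) :
    Coalgebra.comul (R := K) (antipode (R := K) (hmat ρ i j)) =
      ∑ k, antipode (R := K) (hmat ρ k j) ⊗ₜ[K] antipode (R := K) (hmat ρ i k) := by
  classical
  have hGX : (Matrix.of fun p q : Basis.ofVectorSpaceIndex K V =>
        ∑ k, antipode (R := K) (hmat ρ k q) ⊗ₜ[K] antipode (R := K) (hmat ρ p k)) *
      (Matrix.of fun p q : Basis.ofVectorSpaceIndex K V =>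
        ∑ k, hmat ρ p k ⊗ₜ[K] hmat ρ k q) = 1 := by
    ext p q
    rw [Matrix.mul_apply, Matrix.one_apply]
    simp only [Matrix.of_apply, Finset.sum_mul, Finset.mul_sum,
      Algebra.TensorProduct.tmul_mul_tmul]
    rw [Finset.sum_comm]
    rw [Finset.sum_congr rfl (fun k _ => Finset.sum_comm)]
    rw [Finset.sum_congr rfl (fun k _ => Finset.sum_congr rfl (fun m _ => by
      rw [← sum_tmul, antipode_mul_hmat hρ, TensorProduct.ite_tmul]))]
    rw [Finset.sum_congr rfl (fun k _ => Finset.sum_ite_eq' Finset.univ k _)]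
    simp only [Finset.mem_univ, if_true]
    rw [← tmul_sum, antipode_mul_hmat hρ, TensorProduct.tmul_ite]
    split <;> simp [Algebra.TensorProduct.one_def]
  have hXZ : (Matrix.of fun p q : Basis.ofVectorSpaceIndex K V =>
        ∑ k, hmat ρ p k ⊗ₜ[K] hmat ρ k q) *
      (Matrix.of fun p q : Basis.ofVectorSpaceIndex K V =>
        Coalgebra.comul (R := K) (antipode (R := K) (hmat ρ p q))) = 1 := by
    ext p q
    rw [Matrix.mul_apply, Matrix.one_apply]
    simp only [Matrix.of_apply, ← comul_hmat hρ, ← Bialgebra.comul_mul, ← map_sum]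
    rw [mul_antipode_hmat hρ]
    split <;> simp
  have hGZ := left_inv_eq_right_inv hGX hXZ
  exact (congrFun (congrFun hGZ i) j).symm

open scoped Classical in
lemma counit_antipode_hmat (i j : Basis.ofVectorSpaceIndex K V) :
    Coalgebra.counit (R := K) (antipode (R := K) (hmat ρ i j)) =
      if i = j then 1 else 0 := by
  classical
  have h1 := congrArg (Coalgebra.counit (R := K)) (antipode_mul_hmat hρ i j)
  rw [map_sum] at h1
  simp only [Bialgebra.counit_mul] at h1
  rw [Finset.sum_congr rfl (fun k _ => by rw [counit_hmat hρ, mul_ite, mul_one, mul_zero]),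
    Finset.sum_ite_eq'] at h1
  simp only [Finset.mem_univ, if_true] at h1
  rw [h1]
  split <;> simp

end Coef

@[simp] lemma trivialCoaction_apply (k : K) :
    trivialCoaction K H k = k ⊗ₜ[K] (1 : H) := rfl

lemma tc_apply_sum {X Y : Type u} [AddCommGroup X] [Module K X]
    [AddCommGroup Y] [Module K Y]
    (ρX : X →ₗ[K] X ⊗[K] H) (ρY : Y →ₗ[K] Y ⊗[K] H) (x : X) (y : Y)
    {ιX ιY : Type u} [Fintype ιX] [Fintype ιY]
    (xs : ιX → X) (hs : ιX → H) (ys : ιY → Y) (ks : ιY → H)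
    (hx : ρX x = ∑ i, xs i ⊗ₜ[K] hs i) (hy : ρY y = ∑ j, ys j ⊗ₜ[K] ks j) :
    tensorCoaction K H ρX ρY (x ⊗ₜ[K] y) =
      ∑ i, ∑ j, (xs i ⊗ₜ[K] ys j) ⊗ₜ[K] (hs i * ks j) := by
  simp only [tensorCoaction, coe_comp, LinearEquiv.coe_coe, Function.comp_apply,
    map_tmul, hx, hy, sum_tmul, tmul_sum, map_sum, tensorTensorTensorComm_tmul,
    id_coe, id_eq, mul'_apply]
  exact Finset.sum_comm

section DualCoact

variable {V : Type u} [AddCommGroup V] [Module K V] [FiniteDimensional K V]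
variable (ρ : V →ₗ[K] V ⊗[K] H)

/-- The dual coaction on `V*`, built from the antipode. -/
noncomputable def dualCoact : Module.Dual K V →ₗ[K] Module.Dual K V ⊗[K] H :=
  ∑ i, ∑ j, LinearMap.toSpanSingleton K _
      (((Basis.ofVectorSpace K V).coord i) ⊗ₜ[K] antipode (R := K) (hmat ρ j i)) ∘ₗ
    (Module.Dual.eval K V (Basis.ofVectorSpace K V j))

lemma dualCoact_apply (f : Module.Dual K V) :
    dualCoact ρ f = ∑ i, ∑ j, f (Basis.ofVectorSpace K V j) •
      (((Basis.ofVectorSpace K V).coord i) ⊗ₜ[K] antipode (R := K) (hmat ρ j i)) := by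
  simp [dualCoact, LinearMap.sum_apply, toSpanSingleton_apply, Module.Dual.eval_apply]

lemma dualCoact_coord (l : Basis.ofVectorSpaceIndex K V) :
    dualCoact ρ ((Basis.ofVectorSpace K V).coord l) =
      ∑ i, ((Basis.ofVectorSpace K V).coord i) ⊗ₜ[K]
        antipode (R := K) (hmat ρ l i) := by
  classical
  rw [dualCoact_apply]
  simp only [Basis.coord_apply, Basis.repr_self, Finsupp.single_apply,
    ite_smul, one_smul, zero_smul]
  rw [Finset.sum_congr rfl (fun i _ => Finset.sum_ite_eq' Finset.univ l _)]
  simp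

variable {ρ} (hρ : IsComodule K H ρ)
include hρ

lemma dualCoact_isComodule : IsComodule K H (dualCoact ρ) := by
  classical
  constructor
  · suffices h : ((TensorProduct.assoc K (Module.Dual K V) H H).toLinearMap ∘ₗ
        LinearMap.rTensor H (dualCoact ρ) ∘ₗ dualCoact ρ) =
        (LinearMap.lTensor (Module.Dual K V) (Coalgebra.comul (R := K)) ∘ₗ dualCoact ρ) by
      intro f
      exact DFunLike.congr_fun h f
    apply (Basis.ofVectorSpace K V).dualBasis.ext
    intro l
    simp only [coe_comp, Function.comp_apply, LinearEquiv.coe_coe, Basis.coe_dualBasis]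
    rw [dualCoact_coord]
    rw [map_sum, map_sum]
    simp only [rTensor_tmul, dualCoact_coord, sum_tmul, map_sum, assoc_tmul,
      lTensor_tmul, comul_antipode_hmat hρ, tmul_sum]
    rw [Finset.sum_comm]
  · suffices h : ((TensorProduct.rid K (Module.Dual K V)).toLinearMap ∘ₗ
        LinearMap.lTensor (Module.Dual K V) (Coalgebra.counit (R := K)) ∘ₗ dualCoact ρ) =
        LinearMap.id by
      intro f
      exact DFunLike.congr_fun h f
    apply (Basis.ofVectorSpace K V).dualBasis.ext
    intro l
    simp only [coe_comp, Function.comp_apply, LinearEquiv.coe_coe, Basis.coe_dualBasis,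
      id_coe, id_eq]
    rw [dualCoact_coord, map_sum, map_sum]
    simp only [lTensor_tmul, rid_tmul, counit_antipode_hmat hρ, ite_smul, one_smul,
      zero_smul]
    rw [Finset.sum_ite_eq Finset.univ l _]
    simp

lemma dualCoact_ev_hom :
    IsComodHom K H (tensorCoaction K H (dualCoact ρ) ρ) (trivialCoaction K H)
      (contractLeft K V) := by
  classical
  suffices h : (trivialCoaction K H ∘ₗ contractLeft K V) =
      (LinearMap.rTensor H (contractLeft K V) ∘ₗ
        tensorCoaction K H (dualCoact ρ) ρ) by
    intro x
    exact DFunLike.congr_fun h x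
  apply TensorProduct.ext
  apply (Basis.ofVectorSpace K V).dualBasis.ext
  intro l
  apply (Basis.ofVectorSpace K V).ext
  intro m
  simp only [compr₂_apply, compr₂ₛₗ_apply, mk_apply, coe_comp, Function.comp_apply, Basis.coe_dualBasis]
  rw [tc_apply_sum (K := K) (H := H) _ _ _ _ _ _ _ _
    (dualCoact_coord ρ l) (coact_basis ρ m)]
  rw [map_sum]
  simp only [map_sum, rTensor_tmul, contractLeft_apply, Basis.coord_apply,
    Basis.repr_self, Finsupp.single_apply, TensorProduct.ite_tmul]
  rw [Finset.sum_congr rfl (fun i _ => Finset.sum_ite_eq' Finset.univ i _)]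
  simp only [Finset.mem_univ, if_true]
  rw [← tmul_sum, antipode_mul_hmat hρ]
  by_cases hlm : l = m <;>
    simp [hlm, eq_comm, TensorProduct.tmul_ite, TensorProduct.ite_tmul]

lemma dualCoact_coev_hom :
    IsComodHom K H (trivialCoaction K H)
      (tensorCoaction K H ρ (dualCoact ρ)) (coevaluation K V) := by
  classical
  intro k
  have hk : k = k • (1 : K) := by simp
  rw [hk]
  simp only [map_smul]
  congr 1
  rw [trivialCoaction_apply, coevaluation_apply_one]
  simp only [map_sum]
  rw [Finset.sum_congr rfl (fun i _ => tc_apply_sum (K := K) (H := H) _ _ _ _ _ _ _ _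
    (coact_basis ρ i) (dualCoact_coord ρ i))]
  rw [Finset.sum_comm]
  rw [Finset.sum_congr rfl (fun j _ => Finset.sum_comm)]
  simp only [← tmul_sum]
  rw [Finset.sum_congr rfl (fun j _ => Finset.sum_congr rfl (fun k' _ => by
    rw [mul_antipode_hmat hρ]))]
  simp only [TensorProduct.tmul_ite]
  rw [Finset.sum_congr rfl (fun j _ => Finset.sum_ite_eq Finset.univ j _)]
  simp only [Finset.mem_univ, if_true]
  rw [rTensor_tmul, coevaluation_apply_one, sum_tmul]

end DualCoact

section Pair

variable {M N : Type u} [AddCommGroup M] [Module K M] [AddCommGroup N] [Module K N]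

/-- Pairing of two functionals into a functional on the tensor product. -/
noncomputable def pairφ (φ : M →ₗ[K] K) (ψ : N →ₗ[K] K) : M ⊗[K] N →ₗ[K] K :=
  LinearMap.mul' K K ∘ₗ TensorProduct.map φ ψ

@[simp] lemma pairφ_tmul (φ : M →ₗ[K] K) (ψ : N →ₗ[K] K) (m : M) (n : N) :
    pairφ φ ψ (m ⊗ₜ[K] n) = φ m * ψ n := by
  simp [pairφ]

variable {W : Type u} [AddCommGroup W] [Module K W]
variable {ι κ : Type u} [Fintype ι] [Fintype κ]

lemma ext2_sum (b : Basis ι K M) (c : Basis κ K N) [DecidableEq ι] [DecidableEq κ]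
    (w : ι → κ → W) (j : ι) (k : κ) :
    extr (pairφ (b.coord j) (c.coord k))
      (∑ p, ∑ q, (b p ⊗ₜ[K] c q) ⊗ₜ[K] w p q) = w j k := by
  rw [map_sum]
  simp only [map_sum, extr_tmul, pairφ_tmul, Basis.coord_apply, Basis.repr_self,
    Finsupp.single_apply]
  have hstep : ∀ p : ι,
      (∑ q : κ, ((if p = j then (1 : K) else 0) * (if q = k then (1 : K) else 0)) • w p q)
        = if p = j then w p k else 0 := by
    intro p
    by_cases hp : p = j <;>
      simp [hp, ite_smul, Finset.sum_ite_eq']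
  rw [Finset.sum_congr rfl fun p _ => hstep p, Finset.sum_ite_eq' Finset.univ j _]
  simp

end Pair

section Alg

variable (A : FDComodAlg K H)

lemma phiMap_apply (a : A.carrier) :
    phiMap A.carrier A.mul a =
      ∑ i, A.mul (a ⊗ₜ[K] Basis.ofVectorSpace K A.carrier i) ⊗ₜ[K]
        (Basis.ofVectorSpace K A.carrier).coord i := by
  simp only [phiMap, coe_comp, Function.comp_apply, LinearEquiv.coe_coe, rid_symm_apply,
    lTensor_tmul, coevaluation_apply_one, tmul_sum, map_sum, assoc_symm_tmul, rTensor_tmul]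

lemma mul_expand (a y : A.carrier) :
    ∑ i, ((Basis.ofVectorSpace K A.carrier).coord i y) •
      A.mul (a ⊗ₜ[K] Basis.ofVectorSpace K A.carrier i) = A.mul (a ⊗ₜ[K] y) := by
  simp only [← map_smul]
  rw [← map_sum]
  simp only [← tmul_smul]
  rw [← tmul_sum]
  simp only [Basis.coord_apply]
  rw [Basis.sum_repr]

lemma phiMap_inj : Function.Injective (phiMap A.carrier A.mul) := by
  have key : ∀ a, (TensorProduct.rid K A.carrier).toLinearMap
      (LinearMap.lTensor A.carrier (Module.Dual.eval K A.carrier (A.one 1))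
        (phiMap A.carrier A.mul a)) = a := by
    intro a
    rw [phiMap_apply, map_sum, map_sum]
    simp only [lTensor_tmul, Module.Dual.eval_apply, LinearEquiv.coe_coe, rid_tmul]
    rw [mul_expand, A.mul_one']
  intro a₁ a₂ hEq
  rw [← key a₁, ← key a₂, hEq]

lemma endMul_tmul {V : Type u} [AddCommGroup V] [Module K V] [FiniteDimensional K V]
    (x y : V) (f g : Module.Dual K V) :
    endMul K V ((x ⊗ₜ[K] f) ⊗ₜ[K] (y ⊗ₜ[K] g)) = f y • (x ⊗ₜ[K] g) := by
  simp [endMul, smul_tmul']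

lemma phiMap_mulHom (x : A.carrier ⊗[K] A.carrier) :
    phiMap A.carrier A.mul (A.mul x) =
      endMul K A.carrier
        (TensorProduct.map (phiMap A.carrier A.mul) (phiMap A.carrier A.mul) x) := by
  classical
  induction x using TensorProduct.induction_on with
  | zero => simp
  | add x y hx hy => rw [map_add, map_add, map_add, map_add, hx, hy]
  | tmul a c =>
      simp only [map_tmul, phiMap_apply A]
      rw [sum_tmul]
      simp only [tmul_sum, map_sum, endMul_tmul]
      rw [Finset.sum_comm]
      simp only [smul_tmul']
      simp only [← sum_tmul]
      refine Finset.sum_congr rfl (fun j _ => ?_)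
      rw [mul_expand]
      congr 1
      have h := A.mul_assoc' ((a ⊗ₜ[K] c) ⊗ₜ[K] Basis.ofVectorSpace K A.carrier j)
      simpa only [rTensor_tmul, assoc_tmul, lTensor_tmul] using h

lemma phiMap_oneHom (k : K) :
    phiMap A.carrier A.mul (A.one k) = coevaluation K A.carrier k := by
  rw [show k = k • (1 : K) by simp]
  simp only [map_smul]
  congr 1
  rw [phiMap_apply, coevaluation_apply_one]
  simp only [A.one_mul']

variable (ρd : Module.Dual K A.carrier →ₗ[K] Module.Dual K A.carrier ⊗[K] H)

/-- Coefficients of the given dual coaction. -/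
noncomputable def dcoef (i k : Basis.ofVectorSpaceIndex K A.carrier) : H :=
  extr ((Basis.ofVectorSpace K A.carrier).dualBasis.coord k)
    (ρd ((Basis.ofVectorSpace K A.carrier).coord i))

lemma dcoact_expand (i : Basis.ofVectorSpaceIndex K A.carrier) :
    ρd ((Basis.ofVectorSpace K A.carrier).coord i) =
      ∑ k, (Basis.ofVectorSpace K A.carrier).coord k ⊗ₜ[K] dcoef A ρd i k := by
  have h := expand ((Basis.ofVectorSpace K A.carrier).dualBasis)
    (ρd ((Basis.ofVectorSpace K A.carrier).coord i))
  simpa only [Basis.coe_dualBasis, dcoef] using h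

variable (hcoev : IsComodHom K H (trivialCoaction K H)
    (tensorCoaction K H A.coact ρd) (coevaluation K A.carrier))
include hcoev

open scoped Classical in
lemma hmat_dcoef (j k : Basis.ofVectorSpaceIndex K A.carrier) :
    ∑ i, hmat A.coact j i * dcoef A ρd i k = if j = k then (1 : H) else 0 := by
  classical
  have h0 := hcoev 1
  rw [trivialCoaction_apply, coevaluation_apply_one] at h0
  simp only [map_sum] at h0
  rw [Finset.sum_congr rfl (fun i _ => tc_apply_sum (K := K) (H := H) _ _ _ _ _ _ _ _
    (coact_basis A.coact i) (dcoact_expand A ρd i))] at h0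
  rw [Finset.sum_comm] at h0
  rw [Finset.sum_congr rfl (fun j' _ => Finset.sum_comm)] at h0
  simp only [← tmul_sum] at h0
  rw [rTensor_tmul, coevaluation_apply_one, sum_tmul] at h0
  simp only [← Basis.coe_dualBasis] at h0
  have h1 := congrArg (extr (pairφ ((Basis.ofVectorSpace K A.carrier).coord j)
    ((Basis.ofVectorSpace K A.carrier).dualBasis.coord k))) h0
  rw [ext2_sum (Basis.ofVectorSpace K A.carrier)
    ((Basis.ofVectorSpace K A.carrier).dualBasis)] at h1
  rw [h1, map_sum]
  simp only [extr_tmul, pairφ_tmul, Basis.coord_apply, Basis.repr_self,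
    Basis.dualBasis_repr, Finsupp.single_apply]
  simp only [ite_mul, one_mul, zero_mul, ite_smul, zero_smul, one_smul]
  rw [Finset.sum_ite_eq' Finset.univ j _]
  simp only [Finset.mem_univ, if_true]

lemma phiMap_comodHom :
    IsComodHom K H A.coact (tensorCoaction K H A.coact ρd)
      (phiMap A.carrier A.mul) := by
  classical
  intro a
  rw [phiMap_apply, map_sum]
  have hx : ∀ j, A.coact (A.mul (a ⊗ₜ[K] Basis.ofVectorSpace K A.carrier j)) =
      ∑ pq : (Basis.ofVectorSpaceIndex K A.carrier) × (Basis.ofVectorSpaceIndex K A.carrier),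
        A.mul (Basis.ofVectorSpace K A.carrier pq.1 ⊗ₜ[K]
          Basis.ofVectorSpace K A.carrier pq.2) ⊗ₜ[K]
        (extr ((Basis.ofVectorSpace K A.carrier).coord pq.1) (A.coact a) *
          hmat A.coact pq.2 j) := by
    intro j
    rw [A.mul_hom (a ⊗ₜ[K] Basis.ofVectorSpace K A.carrier j)]
    rw [tc_apply_sum (K := K) (H := H) _ _ _ _ _ _ _ _
      (expand (Basis.ofVectorSpace K A.carrier) (A.coact a))
      (coact_basis A.coact j)]
    rw [Fintype.sum_prod_type]
    simp only [map_sum, rTensor_tmul]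
  rw [Finset.sum_congr rfl (fun j _ => tc_apply_sum (K := K) (H := H) _ _ _ _ _ _ _ _
    (hx j) (dcoact_expand A ρd j))]
  rw [Finset.sum_comm]
  rw [Finset.sum_congr rfl (fun pq _ => Finset.sum_comm)]
  simp only [mul_assoc, ← tmul_sum, ← Finset.mul_sum]
  rw [Finset.sum_congr rfl (fun pq _ => Finset.sum_congr rfl (fun k _ => by
    rw [hmat_dcoef A ρd hcoev, mul_ite, mul_one, mul_zero, TensorProduct.tmul_ite]))]
  rw [Finset.sum_congr rfl (fun pq _ => Finset.sum_ite_eq Finset.univ pq.2 _)]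
  simp only [Finset.mem_univ, if_true]
  conv_rhs =>
    rw [expand (Basis.ofVectorSpace K A.carrier) (A.coact a), map_sum]
  simp only [rTensor_tmul, phiMap_apply, sum_tmul]
  rw [Fintype.sum_prod_type]

end Alg

end Thm49

set_option maxHeartbeats 1000000 in
/-- **Theorem 4.9.**  Let `H` be a Hopf algebra over a field `K` and `A` a
finite-dimensional `H`-comodule algebra with multiplication `m`.  Then the map
`φ(m) : A → A ⊗ A*`, `a ↦ Σ_i (a vᵢ) ⊗ vᵢ*`, is an injective morphism of `H`-comodule
algebras into the internal endomorphism algebra `A ⊗ A*`.  Consequently the algebras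
`V ⊗ V*`, for `V` a finite-dimensional right `H`-comodule, form a system of
cogenerators of the category of finite-dimensional algebras in `M^H`: they jointly
distinguish parallel morphisms of finite-dimensional `H`-comodule algebras. -/
theorem phiMap_injective_comodule_algebra_hom_and_cogenerators
    (A : FDComodAlg K H)
    (ρd : Module.Dual K A.carrier →ₗ[K] Module.Dual K A.carrier ⊗[K] H)
    (hρd : IsComodule K H ρd)
    (hev : IsComodHom K H (tensorCoaction K H ρd A.coact) (trivialCoaction K H)
      (contractLeft K A.carrier))
    (hcoev : IsComodHom K H (trivialCoaction K H)
      (tensorCoaction K H A.coact ρd) (coevaluation K A.carrier)) :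
    (Function.Injective (phiMap A.carrier A.mul)) ∧
    (∀ x : A.carrier ⊗[K] A.carrier,
      phiMap A.carrier A.mul (A.mul x) =
      endMul K A.carrier
        (TensorProduct.map (phiMap A.carrier A.mul) (phiMap A.carrier A.mul) x)) ∧
    (∀ k : K, phiMap A.carrier A.mul (A.one k) = coevaluation K A.carrier k) ∧
    IsComodHom K H A.coact (tensorCoaction K H A.coact ρd)
      (phiMap A.carrier A.mul) ∧
    (∀ (B₁ B₂ : FDComodAlg K H) (f g : B₁.carrier →ₗ[K] B₂.carrier),
      IsCAHom K H B₁ B₂ f → IsCAHom K H B₁ B₂ g → f ≠ g →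
      ∃ (P : DualizedComod K H)
        (h : B₂.carrier →ₗ[K] P.V ⊗[K] Module.Dual K P.V),
        (∀ x : B₂.carrier ⊗[K] B₂.carrier,
          h (B₂.mul x) = endMul K P.V (TensorProduct.map h h x)) ∧
        (∀ k : K, h (B₂.one k) = coevaluation K P.V k) ∧
        IsComodHom K H B₂.coact (tensorCoaction K H P.coact P.dcoact) h ∧
        h ∘ₗ f ≠ h ∘ₗ g) := by
  classical
  refine ⟨Thm49.phiMap_inj A, Thm49.phiMap_mulHom A, Thm49.phiMap_oneHom A,
    Thm49.phiMap_comodHom A ρd hcoev, ?_⟩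
  intro B₁ B₂ f g hf hg hfg
  refine ⟨{ V := B₂.carrier, coact := B₂.coact, comod := B₂.comod,
            dcoact := Thm49.dualCoact B₂.coact,
            dcomod := Thm49.dualCoact_isComodule B₂.comod,
            ev_hom := Thm49.dualCoact_ev_hom B₂.comod,
            coev_hom := Thm49.dualCoact_coev_hom B₂.comod },
    phiMap B₂.carrier B₂.mul,
    Thm49.phiMap_mulHom B₂, Thm49.phiMap_oneHom B₂,
    Thm49.phiMap_comodHom B₂ (Thm49.dualCoact B₂.coact)
      (Thm49.dualCoact_coev_hom B₂.comod), ?_⟩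
  intro hEq
  apply hfg
  apply LinearMap.ext
  intro x
  exact Thm49.phiMap_inj B₂ (DFunLike.congr_fun hEq x)

end Stmt14
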